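/- If U is an orthogonal p×p matrix and M is a p×q real matrix, then for every k ≤ min(p,q), the maximal absolute value of a k×k subdeterminant of UM is bounded above and below by constant multiples (depending only on p, q, k) of the maximal absolute value of a k×k subdeterminant of M. -/
import Mathlib


open scoped BigOperators
open Matrix

/-- The maximal absolute value of a `k × k` subdeterminant of a real `p × q` matrix. -/
noncomputable def maxSubdet {p q : ℕ} (k : ℕ) (M : Matrix (Fin p) (Fin q) ℝ) : ℝ :=
  ⨆ (f : Fin k → Fin p) (g : Fin k → Fin q) (_ : Function.Injective f)
    (_ : Function.Injective g), |(M.submatrix f g).det|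

private lemma le_maxSubdet {p q k : ℕ} (M : Matrix (Fin p) (Fin q) ℝ)
    (f : Fin k → Fin p) (g : Fin k → Fin q) (hf : Function.Injective f)
    (hg : Function.Injective g) : |(M.submatrix f g).det| ≤ maxSubdet k M := by
  unfold maxSubdet
  refine le_ciSup_of_le (Set.Finite.bddAbove (Set.finite_range _)) f ?_
  refine le_ciSup_of_le (Set.Finite.bddAbove (Set.finite_range _)) g ?_
  refine le_ciSup_of_le (Set.Finite.bddAbove (Set.finite_range _)) hf ?_
  exact le_ciSup_of_le (Set.Finite.bddAbove (Set.finite_range _)) hg le_rfl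

private lemma maxSubdet_le {p q k : ℕ} (M : Matrix (Fin p) (Fin q) ℝ) {B : ℝ} (hB : 0 ≤ B)
    (h : ∀ (f : Fin k → Fin p) (g : Fin k → Fin q), Function.Injective f →
      Function.Injective g → |(M.submatrix f g).det| ≤ B) : maxSubdet k M ≤ B := by
  refine Real.iSup_le (fun f => Real.iSup_le (fun g => Real.iSup_le (fun hf =>
    Real.iSup_le (fun hg => h f g hf hg) hB) hB) hB) hB

private lemma maxSubdet_nonneg {p q k : ℕ} (hkp : k ≤ p) (hkq : k ≤ q)
    (M : Matrix (Fin p) (Fin q) ℝ) : 0 ≤ maxSubdet k M :=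
  le_trans (abs_nonneg _)
    (le_maxSubdet M (Fin.castLE hkp) (Fin.castLE hkq)
      (Fin.castLE_injective hkp) (Fin.castLE_injective hkq))

/-- Row expansion of the determinant of a product of rectangular matrices. -/
private lemma det_mul_expand {k p : ℕ} (A : Matrix (Fin k) (Fin p) ℝ)
    (B : Matrix (Fin p) (Fin k) ℝ) :
    (A * B).det = ∑ φ : Fin k → Fin p, (∏ i, A i (φ i)) * (B.submatrix φ id).det := by
  have h1 : (A * B) = fun i => ∑ l, A i l • B l := by
    ext i j
    simp [Matrix.mul_apply]
  have h := (Matrix.detRowAlternating (R := ℝ) (n := Fin k)).toMultilinearMap.map_sum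
    (g := fun (i : Fin k) (l : Fin p) => A i l • B l)
  have h2 : ∀ φ : Fin k → Fin p,
      (Matrix.detRowAlternating (R := ℝ) (n := Fin k)).toMultilinearMap
        (fun i => A i (φ i) • B (φ i))
      = (∏ i, A i (φ i)) * (B.submatrix φ id).det := by
    intro φ
    have h3 := MultilinearMap.map_smul_univ
      (Matrix.detRowAlternating (R := ℝ) (n := Fin k)).toMultilinearMap
      (fun i => A i (φ i)) (fun i => B (φ i))
    rw [h3, smul_eq_mul]
    congr 1
  calc (A * B).det
      = (Matrix.detRowAlternating (R := ℝ) (n := Fin k)).toMultilinearMap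
          (fun i => ∑ l, A i l • B l) := by rw [show (A * B).det
            = (Matrix.detRowAlternating (R := ℝ) (n := Fin k)).toMultilinearMap (A * B)
            from rfl, h1]
    _ = ∑ φ : Fin k → Fin p,
          (Matrix.detRowAlternating (R := ℝ) (n := Fin k)).toMultilinearMap
            (fun i => A i (φ i) • B (φ i)) := h
    _ = ∑ φ : Fin k → Fin p, (∏ i, A i (φ i)) * (B.submatrix φ id).det :=
        Finset.sum_congr rfl fun φ _ => h2 φ

/-- Key bound: if all entries of `V` have absolute value at most 1, then
`maxSubdet k (V * M) ≤ p^k * maxSubdet k M`. -/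
private lemma key {p q k : ℕ} (hkp : k ≤ p) (hkq : k ≤ q)
    (V : Matrix (Fin p) (Fin p) ℝ) (hV : ∀ i j, |V i j| ≤ 1)
    (M : Matrix (Fin p) (Fin q) ℝ) :
    maxSubdet k (V * M) ≤ (p : ℝ) ^ k * maxSubdet k M := by
  have hM : 0 ≤ maxSubdet k M := maxSubdet_nonneg hkp hkq M
  refine maxSubdet_le _ (by positivity) ?_
  intro f g hf hg
  have hsub : (V * M).submatrix f g = V.submatrix f id * M.submatrix id g :=
    Matrix.submatrix_mul V M f id g Function.bijective_id
  rw [hsub, det_mul_expand]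
  calc |∑ φ : Fin k → Fin p, (∏ i, (V.submatrix f id) i (φ i)) *
        ((M.submatrix id g).submatrix φ id).det|
      ≤ ∑ φ : Fin k → Fin p, |(∏ i, (V.submatrix f id) i (φ i)) *
        ((M.submatrix id g).submatrix φ id).det| := Finset.abs_sum_le_sum_abs _ _
    _ ≤ ∑ _φ : Fin k → Fin p, maxSubdet k M := by
        refine Finset.sum_le_sum fun φ _ => ?_
        rw [abs_mul]
        by_cases hφ : Function.Injective φ
        · have h1 : |∏ i, (V.submatrix f id) i (φ i)| ≤ 1 := by
            rw [Finset.abs_prod]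
            calc ∏ i, |(V.submatrix f id) i (φ i)| ≤ ∏ _i : Fin k, (1 : ℝ) :=
                  Finset.prod_le_prod (fun _ _ => abs_nonneg _) (fun i _ => hV _ _)
              _ = 1 := by simp
          have h2 : |((M.submatrix id g).submatrix φ id).det| ≤ maxSubdet k M := by
            have : (M.submatrix id g).submatrix φ id = M.submatrix φ g := by
              ext i j; simp [Matrix.submatrix_apply]
            rw [this]
            exact le_maxSubdet M φ g hφ hg
          calc |∏ i, (V.submatrix f id) i (φ i)| * |((M.submatrix id g).submatrix φ id).det|
              ≤ 1 * maxSubdet k M :=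
                mul_le_mul h1 h2 (abs_nonneg _) zero_le_one
            _ = maxSubdet k M := one_mul _
        · have : ((M.submatrix id g).submatrix φ id).det = 0 := by
            obtain ⟨i, j, hij, hne⟩ : ∃ i j, φ i = φ j ∧ i ≠ j := by
              simp only [Function.Injective, not_forall] at hφ
              obtain ⟨i, j, h1, h2⟩ := hφ
              exact ⟨i, j, h1, h2⟩
            refine Matrix.det_zero_of_row_eq hne ?_
            ext l
            simp [Matrix.submatrix_apply, hij]
          rw [this]
          simpa using hM
    _ = (p : ℝ) ^ k * maxSubdet k M := by
        rw [Finset.sum_const, Finset.card_univ]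
        simp [Fintype.card_fun, mul_comm]

/-- For `U` orthogonal, `D_k(UM)` is comparable to `D_k(M)`, with constants
depending only on `p`, `q`, `k`. -/
theorem stmt0 (p q k : ℕ) (hk : k ≤ min p q) :
    ∃ c C : ℝ, 0 < c ∧ 0 < C ∧
      ∀ (U : Matrix (Fin p) (Fin p) ℝ) (M : Matrix (Fin p) (Fin q) ℝ),
        Uᵀ * U = 1 →
          c * maxSubdet k M ≤ maxSubdet k (U * M) ∧
            maxSubdet k (U * M) ≤ C * maxSubdet k M := by
  have hkp : k ≤ p := hk.trans (min_le_left _ _)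
  have hkq : k ≤ q := hk.trans (min_le_right _ _)
  have hCpos : (0 : ℝ) < (p : ℝ) ^ k + 1 := by positivity
  refine ⟨((p : ℝ) ^ k + 1)⁻¹, (p : ℝ) ^ k + 1, by positivity, hCpos, ?_⟩
  intro U M hU
  have hUentry : ∀ i j, |U i j| ≤ 1 := by
    intro i j
    have h1 : (Uᵀ * U) j j = 1 := by rw [hU]; simp
    have h2 : ∑ l, U l j * U l j = 1 := by
      simpa [Matrix.mul_apply, Matrix.transpose_apply] using h1
    have h3 : U i j * U i j ≤ 1 := by
      rw [← h2]
      exact Finset.single_le_sum (f := fun l => U l j * U l j)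
        (fun l _ => mul_self_nonneg _) (Finset.mem_univ i)
    nlinarith [abs_nonneg (U i j), sq_abs (U i j)]
  have hUtentry : ∀ i j, |Uᵀ i j| ≤ 1 := fun i j => hUentry j i
  have hpk : (p : ℝ) ^ k ≤ (p : ℝ) ^ k + 1 := by linarith
  have hM : 0 ≤ maxSubdet k M := maxSubdet_nonneg hkp hkq M
  have hUM : 0 ≤ maxSubdet k (U * M) := maxSubdet_nonneg hkp hkq (U * M)
  constructor
  · -- lower bound
    have hMeq : Uᵀ * (U * M) = M := by rw [← Matrix.mul_assoc, hU, Matrix.one_mul]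
    have hlow : maxSubdet k M ≤ ((p : ℝ) ^ k + 1) * maxSubdet k (U * M) := by
      calc maxSubdet k M = maxSubdet k (Uᵀ * (U * M)) := by rw [hMeq]
        _ ≤ (p : ℝ) ^ k * maxSubdet k (U * M) := key hkp hkq Uᵀ hUtentry (U * M)
        _ ≤ ((p : ℝ) ^ k + 1) * maxSubdet k (U * M) := by nlinarith
    rw [inv_mul_le_iff₀ hCpos]
    exact hlow
  · calc maxSubdet k (U * M) ≤ (p : ℝ) ^ k * maxSubdet k M := key hkp hkq U hUentry M
      _ ≤ ((p : ℝ) ^ k + 1) * maxSubdet k M := by nlinarith
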